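/- For the switched two-dimensional competitive Lotka–Volterra system with vector fields V(1)(x) = (a_1(1)x_1, a_2(1)x_2) (linear) and V(2)(x) = (x_1(a_1(2)-b_1(2)x_1-c_1(2)x_2), x_2(a_2(2)-b_2(2)x_2-c_2(2)x_1)), the determinant of the 2×2 matrix whose columns are V(1)-V(2) and the Lie bracket [V(1), V(1)-V(2)] equals B x_1^2 x_2^2 + A_1 x_1 x_2^2 + A_2 x_1^2 x_2, where A_1 = (a_1(1)-a_1(2)) a_2(1) b_2(2) - a_2(1) c_1(2)(a_2(1)-a_2(2)), A_2 = (a_1(1)-a_1(2)) a_1(1) c_2(2) - a_1(1) b_1(2)(a_2(1)-a_2(2)), and B = (a_2(1)-a_1(1)) b_1(2) b_2(2) + (a_1(1)-a_2(1)) c_1(2) c_2(2). -/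

import Mathlib

noncomputable def lieBracket (V W : (Fin 2 → ℝ) → (Fin 2 → ℝ)) (x : Fin 2 → ℝ) :
    Fin 2 → ℝ :=
  fderiv ℝ W x (V x) - fderiv ℝ V x (W x)

theorem stmt15 (a11 a21 a12 a22 b12 b22 c12 c22 : ℝ) :
    ∀ x : Fin 2 → ℝ,
      (let V1 : (Fin 2 → ℝ) → (Fin 2 → ℝ) := fun y => ![a11 * y 0, a21 * y 1]
       let V2 : (Fin 2 → ℝ) → (Fin 2 → ℝ) := fun y =>
        ![y 0 * (a12 - b12 * y 0 - c12 * y 1), y 1 * (a22 - b22 * y 1 - c22 * y 0)]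
       let A1 : ℝ := (a11 - a12) * a21 * b22 - a21 * c12 * (a21 - a22)
       let A2 : ℝ := (a11 - a12) * a11 * c22 - a11 * b12 * (a21 - a22)
       let B : ℝ := (a21 - a11) * b12 * b22 + (a11 - a21) * c12 * c22
       (V1 x - V2 x) 0 * (lieBracket V1 (fun y => V1 y - V2 y) x) 1 -
         (lieBracket V1 (fun y => V1 y - V2 y) x) 0 * (V1 x - V2 x) 1
        = B * (x 0) ^ 2 * (x 1) ^ 2 + A1 * (x 0) * (x 1) ^ 2 + A2 * (x 0) ^ 2 * (x 1)) := by
  intro x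
  set V1 : (Fin 2 → ℝ) → (Fin 2 → ℝ) := fun y => ![a11 * y 0, a21 * y 1] with hV1
  set V2 : (Fin 2 → ℝ) → (Fin 2 → ℝ) := fun y =>
    ![y 0 * (a12 - b12 * y 0 - c12 * y 1), y 1 * (a22 - b22 * y 1 - c22 * y 0)] with hV2
  let p0 : (Fin 2 → ℝ) →L[ℝ] ℝ := ContinuousLinearMap.proj 0
  let p1 : (Fin 2 → ℝ) →L[ℝ] ℝ := ContinuousLinearMap.proj 1
  have h0 : ∀ z : Fin 2 → ℝ, HasFDerivAt (fun y : Fin 2 → ℝ => y 0)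
      p0 z := fun z => hasFDerivAt_apply 0 z
  have h1 : ∀ z : Fin 2 → ℝ, HasFDerivAt (fun y : Fin 2 → ℝ => y 1)
      p1 z := fun z => hasFDerivAt_apply 1 z
  -- derivative of V1
  have hDV1 : ∀ z : Fin 2 → ℝ, HasFDerivAt V1
      (ContinuousLinearMap.pi ![a11 • p0,
        a21 • p1]) z := by
    intro z
    apply hasFDerivAt_pi''
    intro i
    fin_cases i
    · simpa [hV1] using ((h0 z).const_mul a11)
    · simpa [hV1] using ((h1 z).const_mul a21)
  -- derivative of W = V1 - V2
  have hDW : ∀ z : Fin 2 → ℝ, HasFDerivAt (fun y => V1 y - V2 y)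
      (ContinuousLinearMap.pi
        ![(a11 • p0) -
            ((z 0 • ((- (b12 • p0)) -
              c12 • p1)) +
             (a12 - b12 * z 0 - c12 * z 1) • p0),
          (a21 • p1) -
            ((z 1 • ((- (b22 • p1)) -
              c22 • p0)) +
             (a22 - b22 * z 1 - c22 * z 0) • p1)]) z := by
    intro z
    apply hasFDerivAt_pi''
    intro i
    fin_cases i
    · have hin : HasFDerivAt (fun y : Fin 2 → ℝ => a12 - b12 * y 0 - c12 * y 1)
          ((- (b12 • p0)) -
            c12 • p1) z := by
        exact (((h0 z).const_mul b12).const_sub a12).sub ((h1 z).const_mul c12)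
      have := ((h0 z).const_mul a11).sub ((h0 z).mul hin)
      simpa [hV1, hV2, Pi.sub_def, Pi.mul_def] using this
    · have hin : HasFDerivAt (fun y : Fin 2 → ℝ => a22 - b22 * y 1 - c22 * y 0)
          ((- (b22 • p1)) -
            c22 • p0) z := by
        exact (((h1 z).const_mul b22).const_sub a22).sub ((h0 z).const_mul c22)
      have := ((h1 z).const_mul a21).sub ((h1 z).mul hin)
      simpa [hV1, hV2, Pi.sub_def, Pi.mul_def] using this
  simp only [lieBracket, (hDV1 x).fderiv, (hDW x).fderiv]
  simp [hV1, hV2, p0, p1, Fin.isValue, ContinuousLinearMap.pi_apply, Pi.sub_apply]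
  ring
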